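/- Let p, q in [0,1] with p < (1-q)/2, and let f: {1,...,2a} -> Q (rationals) satisfy: (1) |{x in [a] : f(x) = 0}| <= q*a; (2) |{x in [a] : f(x+a) != f(x)}| <= p*a. Then |{(x,y) in [a] x [a] : f(x+y) != f(x) + f(y)}| >= ((1-q-2p)^2/4)*a^2 + ((1-q-2p)/2)*a. -/

import Mathlib

set_option maxHeartbeats 1000000

open Finset

section helpers


lemma chainArith (w κ A A' T1 T2 : ℕ)
    (hA : A ≤ T1 + T2 + A')
    (hT1a : T1 ≤ κ) (hT1b : T1 + 1 ≤ 2 * (w + 2))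
    (hT2a : T2 ≤ κ) (hT2b : T2 + 3 ≤ 2 * (w + 2))
    (hIH : 4 * A' + (min κ (2 * w)) ^ 2 ≤ 4 * (min κ (2 * w)) * w + min κ (2 * w)) :
    4 * A + (min κ (2 * (w + 2))) ^ 2 ≤ 4 * (min κ (2 * (w + 2))) * (w + 2) + min κ (2 * (w + 2)) := by
  rcases le_or_gt κ (2 * w) with hc | hc
  · rw [Nat.min_eq_left hc] at hIH
    rw [Nat.min_eq_left (by omega : κ ≤ 2 * (w + 2))]
    nlinarith [hIH, hA, hT1a, hT2a]
  · rw [Nat.min_eq_right (by omega : 2 * w ≤ κ)] at hIH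
    rcases lt_or_ge κ (2 * (w + 2)) with hc2 | hc2
    · rw [Nat.min_eq_left (by omega : κ ≤ 2 * (w + 2))]
      have h3 : κ = 2 * w + 1 ∨ κ = 2 * w + 2 ∨ κ = 2 * w + 3 := by omega
      rcases h3 with rfl | rfl | rfl <;> nlinarith [hIH, hA, hT1a, hT2a, hT1b, hT2b]
    · rw [Nat.min_eq_right (by omega : 2 * (w + 2) ≤ κ)]
      nlinarith [hIH, hA, hT1b, hT2b]

lemma hits_bound (S : Finset ℕ) (P : Finset ℕ) :
    4 * ((P ×ˢ P).filter (fun w => w.1 + w.2 ∈ S)).card + (min S.card (2 * P.card)) ^ 2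
      ≤ 4 * (min S.card (2 * P.card)) * P.card + min S.card (2 * P.card) := by
  induction P using Finset.strongInduction with
  | _ P IH =>
  by_cases h2 : P.card ≤ 1
  · -- base cases
    rcases Nat.le_one_iff_eq_zero_or_eq_one.mp h2 with hc0 | hc1
    · obtain rfl := card_eq_zero.mp hc0
      simp
    · obtain ⟨x, rfl⟩ := card_eq_one.mp hc1
      have hTle : ((({x} : Finset ℕ) ×ˢ ({x} : Finset ℕ)).filter (fun w => w.1 + w.2 ∈ S)).card ≤ 1 := by
        refine le_trans (card_filter_le _ _) ?_
        simp
      rw [card_singleton, mul_one]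
      rcases (by omega : S.card = 0 ∨ S.card = 1 ∨ 2 ≤ S.card) with h | h | h
      · obtain rfl := card_eq_zero.mp h
        simp
      · rw [h, Nat.min_eq_left (by omega)]
        omega
      · rw [Nat.min_eq_right h]
        omega
  · push_neg at h2
    have h2' : 2 ≤ P.card := h2
    have hne : P.Nonempty := card_pos.mp (by omega)
    set m := P.min' hne with hm
    set M := P.max' hne with hM
    have hmem_m : m ∈ P := P.min'_mem hne
    have hmem_M : M ∈ P := P.max'_mem hne
    have hmM : m < M := P.min'_lt_max'_of_card (by omega)
    set T := (P ×ˢ P).filter (fun w => w.1 + w.2 ∈ S) with hT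
    set T1 := T.filter (fun w => w.1 = m ∨ w.2 = M) with hT1
    set Trest := T.filter (fun w => ¬(w.1 = m ∨ w.2 = M)) with hTrest
    set T2 := Trest.filter (fun w => w.2 = m ∨ w.1 = M) with hT2
    set T3 := Trest.filter (fun w => ¬(w.2 = m ∨ w.1 = M)) with hT3
    have hsplit : T.card = T1.card + (T2.card + T3.card) := by
      rw [← card_filter_add_card_filter_not (p := fun w => w.1 = m ∨ w.2 = M)]
      · congr 1
        rw [← card_filter_add_card_filter_not (p := fun w => w.2 = m ∨ w.1 = M)]
    have hmemT : ∀ w ∈ T, w.1 ∈ P ∧ w.2 ∈ P ∧ w.1 + w.2 ∈ S := by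
      intro w hw
      simp only [hT, mem_filter, mem_product] at hw
      exact ⟨hw.1.1, hw.1.2, hw.2⟩
    have hbnd : ∀ x ∈ P, m ≤ x ∧ x ≤ M := fun x hx => ⟨P.min'_le x hx, P.le_max' x hx⟩
    -- T1 ≤ S.card
    have hT1a : T1.card ≤ S.card := by
      apply card_le_card_of_injOn (fun w => w.1 + w.2)
      · intro w hw
        exact (hmemT w (mem_of_mem_filter w hw)).2.2
      · intro w1 hw1 w2 hw2 heq
        have hw1' : w1 ∈ T1 := hw1
        have hw2' : w2 ∈ T1 := hw2
        rw [hT1, mem_filter] at hw1' hw2'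
        obtain ⟨hw1T, hc1⟩ := hw1'
        obtain ⟨hw2T, hc2⟩ := hw2'
        obtain ⟨ha1, hb1, -⟩ := hmemT _ hw1T
        obtain ⟨ha2, hb2, -⟩ := hmemT _ hw2T
        have f1 := hbnd _ ha1; have f2 := hbnd _ hb1
        have f3 := hbnd _ ha2; have f4 := hbnd _ hb2
        have heq' : w1.1 + w1.2 = w2.1 + w2.2 := heq
        have : w1.1 = w2.1 ∧ w1.2 = w2.2 := by omega
        exact Prod.ext this.1 this.2
    -- T1 + 1 ≤ 2 * card
    have hT1b : T1.card + 1 ≤ 2 * P.card := by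
      have hsub : T1 ⊆ ({m} ×ˢ P) ∪ ((P.erase m) ×ˢ {M}) := by
        intro w hw
        simp only [hT1, mem_filter] at hw
        obtain ⟨hwT, hc⟩ := hw
        obtain ⟨ha, hb, -⟩ := hmemT _ hwT
        rcases eq_or_ne w.1 m with h' | h'
        · exact mem_union_left _ (mem_product.mpr ⟨by simp [h'], hb⟩)
        · have hwM : w.2 = M := by tauto
          exact mem_union_right _ (mem_product.mpr ⟨mem_erase.mpr ⟨h', ha⟩, by simp [hwM]⟩)
      have hle : T1.card ≤ ({m} ×ˢ P).card + ((P.erase m) ×ˢ {M}).card :=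
        le_trans (card_le_card hsub) (card_union_le _ _)
      have c1 : (P.erase m).card = P.card - 1 := card_erase_of_mem hmem_m
      simp only [card_product, card_singleton, mul_one, one_mul] at hle
      omega
    -- T2 ≤ S.card
    have hT2a : T2.card ≤ S.card := by
      apply card_le_card_of_injOn (fun w => w.1 + w.2)
      · intro w hw
        exact (hmemT w (mem_of_mem_filter w (mem_of_mem_filter w hw))).2.2
      · intro w1 hw1 w2 hw2 heq
        have hw1' : w1 ∈ T2 := hw1
        have hw2' : w2 ∈ T2 := hw2
        rw [hT2, mem_filter] at hw1' hw2'
        rw [hTrest, mem_filter] at hw1' hw2'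
        obtain ⟨⟨hw1T, hd1⟩, hc1⟩ := hw1'
        obtain ⟨⟨hw2T, hd2⟩, hc2⟩ := hw2'
        obtain ⟨ha1, hb1, -⟩ := hmemT _ hw1T
        obtain ⟨ha2, hb2, -⟩ := hmemT _ hw2T
        have f1 := hbnd _ ha1; have f2 := hbnd _ hb1
        have f3 := hbnd _ ha2; have f4 := hbnd _ hb2
        push_neg at hd1 hd2
        have heq' : w1.1 + w1.2 = w2.1 + w2.2 := heq
        have : w1.1 = w2.1 ∧ w1.2 = w2.2 := by omega
        exact Prod.ext this.1 this.2
    -- T2 + 3 ≤ 2 * card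
    have hT2b : T2.card + 3 ≤ 2 * P.card := by
      have hsub : T2 ⊆ ((P.erase m) ×ˢ {m}) ∪ ({M} ×ˢ ((P.erase m).erase M)) := by
        intro w hw
        simp only [hT2, hTrest, mem_filter] at hw
        obtain ⟨⟨hwT, hd⟩, hc⟩ := hw
        obtain ⟨ha, hb, -⟩ := hmemT _ hwT
        push_neg at hd
        rcases eq_or_ne w.2 m with hm2 | hm2
        · exact mem_union_left _ (mem_product.mpr ⟨mem_erase.mpr ⟨hd.1, ha⟩, by simp [hm2]⟩)
        · have hM1 : w.1 = M := by tauto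
          exact mem_union_right _ (mem_product.mpr ⟨by simp [hM1],
            mem_erase.mpr ⟨hd.2, mem_erase.mpr ⟨hm2, hb⟩⟩⟩)
      have hle : T2.card ≤ ((P.erase m) ×ˢ {m}).card + ({M} ×ˢ ((P.erase m).erase M)).card :=
        le_trans (card_le_card hsub) (card_union_le _ _)
      have c1 : (P.erase m).card = P.card - 1 := card_erase_of_mem hmem_m
      have c2 : ((P.erase m).erase M).card = (P.erase m).card - 1 :=
        card_erase_of_mem (mem_erase.mpr ⟨(by omega : M ≠ m), hmem_M⟩)
      simp only [card_product, card_singleton, mul_one, one_mul] at hle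
      omega
    -- T3 ≤ inner count
    set P' := (P.erase m).erase M with hP'
    have hcardP' : P'.card = P.card - 2 := by
      have c1 : (P.erase m).card = P.card - 1 := card_erase_of_mem hmem_m
      have c2 : P'.card = (P.erase m).card - 1 :=
        card_erase_of_mem (mem_erase.mpr ⟨(by omega : M ≠ m), hmem_M⟩)
      omega
    have hT3a : T3.card ≤ ((P' ×ˢ P').filter (fun w => w.1 + w.2 ∈ S)).card := by
      apply card_le_card
      intro w hw
      simp only [hT3, hTrest, mem_filter] at hw
      obtain ⟨⟨hwT, hd⟩, hc⟩ := hw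
      obtain ⟨ha, hb, hs⟩ := hmemT _ hwT
      push_neg at hd hc
      simp only [mem_filter, mem_product, hP', mem_erase]
      exact ⟨⟨⟨hc.2, hd.1, ha⟩, ⟨hd.2, hc.1, hb⟩⟩, hs⟩
    have hss : P' ⊂ P :=
      lt_of_le_of_lt (erase_subset M (P.erase m)) (erase_ssubset hmem_m)
    have hIH' := IH P' hss
    -- assemble
    obtain ⟨w, hw⟩ : ∃ w, P.card = w + 2 := ⟨P.card - 2, by omega⟩
    rw [hw]
    rw [hw] at hT1b hT2b
    rw [hcardP', hw] at hIH'
    simp only [Nat.add_sub_cancel] at hIH'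
    have hAle : T.card ≤ T1.card + T2.card +
        ((P' ×ˢ P').filter (fun w => w.1 + w.2 ∈ S)).card := by omega
    revert hAle hT1a hT1b hT2a hT2b hIH'
    generalize T.card = An
    generalize T1.card = t1
    generalize T2.card = t2
    generalize ((P' ×ˢ P').filter (fun w => w.1 + w.2 ∈ S)).card = A'
    generalize S.card = kn
    intro h1 h2 h3 h4 h5 h6
    exact chainArith w kn An A' t1 t2 (by assumption) (by assumption) (by assumption)
      (by assumption) (by assumption) (by assumption)


lemma side_bound (g : ℕ → ℚ) (a : ℕ) :
    (((Finset.Icc 1 a).filter (fun x => 0 < g x)).card) ^ 2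
      + ((Finset.Icc 1 a).filter (fun x => 0 < g x)).card ≤
    2 * ((((Finset.Icc 1 a).filter (fun x => 0 < g x)) ×ˢ ((Finset.Icc 1 a).filter (fun x => 0 < g x))).filter
        (fun w => g (w.1 + w.2) ≠ g w.1 + g w.2)).card
      + 2 * ((((Finset.Icc 1 a).filter (fun x => 0 < g x)) ×ˢ ((Finset.Icc 1 a).filter (fun x => 0 < g x))).filter
        (fun w => w.1 + w.2 ∈ (((Finset.Icc 1 a).filter (fun z => g (z + a) ≠ g z ∧ 0 < g (z + a))).image (· + a)))).card := by
  set P := (Finset.Icc 1 a).filter (fun x => 0 < g x) with hP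
  set S := ((Finset.Icc 1 a).filter (fun z => g (z + a) ≠ g z ∧ 0 < g (z + a))).image (· + a) with hS
  have hmemP : ∀ x ∈ P, 1 ≤ x ∧ x ≤ a ∧ 0 < g x := by
    intro x hx
    rw [hP, mem_filter, mem_Icc] at hx
    exact ⟨hx.1.1, hx.1.2, hx.2⟩
  set u := P.card with hu
  have hPP : (P ×ˢ P).card = u * u := by rw [card_product]
  set prob := (P ×ˢ P).filter (fun w => g (w.1 + w.2) ≠ g w.1 + g w.2) with hprob
  set npp := (P ×ˢ P).filter (fun w => ¬(g (w.1 + w.2) ≠ g w.1 + g w.2)) with hnpp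
  have hsplit1 : prob.card + npp.card = u * u := by
    rw [hprob, hnpp, card_filter_add_card_filter_not, hPP]
  set npp2 := npp.filter (fun w => a < w.1 + w.2 ∧ g (w.1 + w.2) ≠ g (w.1 + w.2 - a)) with hnpp2
  set npp1 := npp.filter (fun w => ¬(a < w.1 + w.2 ∧ g (w.1 + w.2) ≠ g (w.1 + w.2 - a))) with hnpp1
  have hsplit2 : npp2.card + npp1.card = npp.card := by
    rw [hnpp2, hnpp1, card_filter_add_card_filter_not]
  -- npp2 is within the "hits" set
  have hnpp2le : npp2.card ≤ ((P ×ˢ P).filter (fun w => w.1 + w.2 ∈ S)).card := by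
    apply card_le_card
    intro w hw
    rw [hnpp2, mem_filter] at hw
    obtain ⟨hwn, hwrap, hnper⟩ := hw
    rw [hnpp, mem_filter] at hwn
    obtain ⟨hwPP, heqv⟩ := hwn
    push_neg at heqv
    rw [mem_product] at hwPP
    obtain ⟨h1, h2, h3⟩ := hmemP _ hwPP.1
    obtain ⟨h4, h5, h6⟩ := hmemP _ hwPP.2
    rw [mem_filter]
    refine ⟨by rw [mem_product]; exact hwPP, ?_⟩
    rw [hS, mem_image]
    refine ⟨w.1 + w.2 - a, ?_, by omega⟩
    rw [mem_filter, mem_Icc]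
    have hza : w.1 + w.2 - a + a = w.1 + w.2 := by omega
    rw [hza]
    exact ⟨⟨by omega, by omega⟩, hnper, by rw [heqv]; positivity⟩
  -- npp1 injects into increasing pairs
  set INC := (P ×ˢ P).filter (fun w => g w.1 < g w.2) with hINC
  set DEC := (P ×ˢ P).filter (fun w => g w.2 < g w.1) with hDEC
  have hnpp1le : npp1.card ≤ INC.card := by
    apply card_le_card_of_injOn
      (fun w => (w.1, if w.1 + w.2 ≤ a then w.1 + w.2 else w.1 + w.2 - a))
    · intro w hw
      have hw' : w ∈ npp1 := hw
      rw [hnpp1, mem_filter] at hw'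
      obtain ⟨hwn, hcond⟩ := hw'
      rw [hnpp, mem_filter] at hwn
      obtain ⟨hwPP, heqv⟩ := hwn
      push_neg at heqv
      push_neg at hcond
      rw [mem_product] at hwPP
      obtain ⟨h1, h2, h3⟩ := hmemP _ hwPP.1
      obtain ⟨h4, h5, h6⟩ := hmemP _ hwPP.2
      rw [hINC, mem_coe, mem_filter, mem_product]
      by_cases hle : w.1 + w.2 ≤ a
      · simp only [hle, if_true]
        have hgz : g (w.1 + w.2) = g w.1 + g w.2 := heqv
        constructor
        · constructor
          · exact hwPP.1
          · rw [hP, mem_filter, mem_Icc]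
            exact ⟨⟨by omega, hle⟩, by rw [hgz]; positivity⟩
        · simp only [hgz]
          linarith
      · simp only [hle, if_false]
        have hwrap : a < w.1 + w.2 := by omega
        have hper : g (w.1 + w.2) = g (w.1 + w.2 - a) := by
          by_contra hne
          exact hne (hcond hwrap)
        have hgz : g (w.1 + w.2 - a) = g w.1 + g w.2 := by rw [← hper]; exact heqv
        constructor
        · constructor
          · exact hwPP.1
          · rw [hP, mem_filter, mem_Icc]
            exact ⟨⟨by omega, by omega⟩, by rw [hgz]; positivity⟩
        · simp only [hgz]
          linarith
    · intro w1 hw1 w2 hw2 heq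
      have hw1' : w1 ∈ npp1 := hw1
      have hw2' : w2 ∈ npp1 := hw2
      rw [hnpp1, mem_filter, hnpp, mem_filter] at hw1' hw2'
      obtain ⟨⟨hw1PP, -⟩, -⟩ := hw1'
      obtain ⟨⟨hw2PP, -⟩, -⟩ := hw2'
      rw [mem_product] at hw1PP hw2PP
      obtain ⟨h1, h2, -⟩ := hmemP _ hw1PP.1
      obtain ⟨h4, h5, -⟩ := hmemP _ hw1PP.2
      obtain ⟨h1', h2', -⟩ := hmemP _ hw2PP.1
      obtain ⟨h4', h5', -⟩ := hmemP _ hw2PP.2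
      have heq' : (w1.1, if w1.1 + w1.2 ≤ a then w1.1 + w1.2 else w1.1 + w1.2 - a)
          = (w2.1, if w2.1 + w2.2 ≤ a then w2.1 + w2.2 else w2.1 + w2.2 - a) := heq
      rw [Prod.mk.injEq] at heq'
      obtain ⟨heq1, heq2⟩ := heq'
      have : w1.2 = w2.2 := by
        by_cases c1 : w1.1 + w1.2 ≤ a <;> by_cases c2 : w2.1 + w2.2 ≤ a <;>
          simp only [c1, c2, if_true, if_false] at heq2 <;> omega
      exact Prod.ext heq1 this
  -- 2 * INC ≤ u² - u
  have hINCle : 2 * INC.card + u ≤ u * u := by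
    have hcd : INC.card = DEC.card := by
      refine card_nbij' (fun w => (w.2, w.1)) (fun w => (w.2, w.1)) ?_ ?_ ?_ ?_
      · intro w hw
        rw [hINC, mem_coe, mem_filter, mem_product] at hw
        rw [hDEC, mem_coe, mem_filter, mem_product]
        exact ⟨⟨hw.1.2, hw.1.1⟩, hw.2⟩
      · intro w hw
        rw [hDEC, mem_coe, mem_filter, mem_product] at hw
        rw [hINC, mem_coe, mem_filter, mem_product]
        exact ⟨⟨hw.1.2, hw.1.1⟩, hw.2⟩
      · intro w _; rfl
      · intro w _; rfl
    have hdisj : Disjoint INC DEC := by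
      rw [disjoint_left]
      intro w hwI hwD
      rw [hINC, mem_filter] at hwI
      rw [hDEC, mem_filter] at hwD
      linarith [hwI.2, hwD.2]
    have hsub : INC ∪ DEC ⊆ P.offDiag := by
      intro w hw
      rw [mem_union] at hw
      rw [mem_offDiag]
      rcases hw with hw | hw
      · rw [hINC, mem_filter, mem_product] at hw
        refine ⟨hw.1.1, hw.1.2, ?_⟩
        intro hh
        rw [hh] at hw
        linarith [hw.2]
      · rw [hDEC, mem_filter, mem_product] at hw
        refine ⟨hw.1.1, hw.1.2, ?_⟩
        intro hh
        rw [hh] at hw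
        linarith [hw.2]
    have := card_le_card hsub
    rw [card_union_of_disjoint hdisj, offDiag_card, ← hcd, ← hu] at this
    have huu : u ≤ u * u := by
      rcases Nat.eq_zero_or_pos u with h | h
      · simp [h]
      · exact Nat.le_mul_of_pos_left u h
    omega
  rw [pow_two]
  omega


lemma keyQ (U V k1 k2 : ℚ) (h1 : 0 ≤ k1) (h2 : 0 ≤ k2) (h3 : k1 ≤ 2*U) (h4 : k2 ≤ 2*V)
    (h5 : 0 ≤ U+V-2*k1-2*k2) :
    (U+V-2*k1-2*k2)^2 + 2*(U+V-2*k1-2*k2)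
      ≤ 2*(U^2+U) + 2*(V^2+V) - (4*k1*U - k1^2 + k1) - (4*k2*V - k2^2 + k2) := by
  rcases le_or_gt (k1+k2) V with hc | hc
  · rcases le_or_gt (k1+k2) U with hd | hd
    · nlinarith [mul_nonneg h1 (by linarith : (0:ℚ) ≤ V - (k1+k2)),
        mul_nonneg h2 (by linarith : (0:ℚ) ≤ U - (k1+k2)),
        sq_nonneg (U-V), sq_nonneg k1, sq_nonneg k2]
    · nlinarith [sq_nonneg (2*U - 2*k1 - k2), mul_nonneg h1 h5,
        mul_nonneg h1 (by linarith : (0:ℚ) ≤ (k1+k2) - U),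
        mul_nonneg h5 (by linarith : (0:ℚ) ≤ V - U + 2*((k1+k2) - U)), sq_nonneg k1]
  · nlinarith [sq_nonneg (2*V - 2*k2 - k1), mul_nonneg h2 h5,
      mul_nonneg h2 (by linarith : (0:ℚ) ≤ (k1+k2) - V),
      mul_nonneg h5 (by linarith : (0:ℚ) ≤ U - V + 2*((k1+k2) - V)), sq_nonneg k2]

end helpers

theorem nonzero_and_periodic_gives_problems (a : ℕ) (ha : 0 < a) (f : ℕ → ℚ)
    (p q : ℚ) (hq0 : 0 ≤ q) (hq1 : q ≤ 1) (hp0 : 0 ≤ p) (hp : p < (1 - q) / 2)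
    (hZ : (((Finset.Icc 1 a).filter (fun x => f x = 0)).card : ℚ) ≤ q * a)
    (hNP : (((Finset.Icc 1 a).filter (fun x => f (x + a) ≠ f x)).card : ℚ) ≤ p * a) :
    ((1 - q - 2 * p) ^ 2 / 4) * (a : ℚ) ^ 2 + ((1 - q - 2 * p) / 2) * a ≤
      ((((Finset.Icc 1 a) ×ˢ (Finset.Icc 1 a)).filter
        (fun x => f (x.1 + x.2) ≠ f x.1 + f x.2)).card : ℚ) := by
  classical
  -- the two sides
  have hPside := side_bound f a
  have hNside := side_bound (fun x => -(f x)) a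
  set P : Finset ℕ := (Finset.Icc 1 a).filter (fun x => 0 < f x) with hPdef
  set N : Finset ℕ := (Finset.Icc 1 a).filter (fun x => 0 < -(f x)) with hNdef
  set SP : Finset ℕ :=
    ((Finset.Icc 1 a).filter (fun z => f (z + a) ≠ f z ∧ 0 < f (z + a))).image (· + a) with hSPdef
  set SN : Finset ℕ :=
    ((Finset.Icc 1 a).filter (fun z => -(f (z + a)) ≠ -(f z) ∧ 0 < -(f (z + a)))).image (· + a)
    with hSNdef
  have hHP := hits_bound SP P
  have hHN := hits_bound SN N
  -- name the cardinalities
  set probP := ((P ×ˢ P).filter (fun w => f (w.1 + w.2) ≠ f w.1 + f w.2)) with hprobPdef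
  set probN := ((N ×ˢ N).filter
    (fun w => (fun x => -(f x)) (w.1 + w.2) ≠ (fun x => -(f x)) w.1 + (fun x => -(f x)) w.2))
    with hprobNdef
  set AP := ((P ×ˢ P).filter (fun w => w.1 + w.2 ∈ SP)) with hAPdef
  set AN := ((N ×ˢ N).filter (fun w => w.1 + w.2 ∈ SN)) with hANdef
  -- |SP| + |SN| ≤ |NPset|
  have hSPcard : SP.card = ((Finset.Icc 1 a).filter
      (fun z => f (z + a) ≠ f z ∧ 0 < f (z + a))).card :=
    card_image_of_injective _ (add_left_injective a)
  have hSNcard : SN.card = ((Finset.Icc 1 a).filter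
      (fun z => -(f (z + a)) ≠ -(f z) ∧ 0 < -(f (z + a)))).card :=
    card_image_of_injective _ (add_left_injective a)
  have hKsum : SP.card + SN.card ≤
      ((Finset.Icc 1 a).filter (fun x => f (x + a) ≠ f x)).card := by
    rw [hSPcard, hSNcard]
    have hdisj : Disjoint
        ((Finset.Icc 1 a).filter (fun z => f (z + a) ≠ f z ∧ 0 < f (z + a)))
        ((Finset.Icc 1 a).filter (fun z => -(f (z + a)) ≠ -(f z) ∧ 0 < -(f (z + a)))) := by
      rw [disjoint_left]
      intro z hz1 hz2
      rw [mem_filter] at hz1 hz2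
      have := hz1.2.2
      have := hz2.2.2
      linarith
    rw [← card_union_of_disjoint hdisj]
    apply card_le_card
    intro z hz
    rw [mem_union, mem_filter, mem_filter] at hz
    rw [mem_filter]
    rcases hz with hz | hz
    · exact ⟨hz.1, hz.2.1⟩
    · refine ⟨hz.1, fun hh => hz.2.1 (by rw [hh])⟩
  -- partition of Icc 1 a
  have hPart : P.card + N.card + ((Finset.Icc 1 a).filter (fun x => f x = 0)).card = a := by
    have h1 : ((Finset.Icc 1 a).filter (fun x => f x = 0)).card
        + ((Finset.Icc 1 a).filter (fun x => ¬(f x = 0))).card = (Finset.Icc 1 a).card :=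
      card_filter_add_card_filter_not _
    have h2 : (Finset.Icc 1 a).filter (fun x => ¬(f x = 0)) = P ∪ N := by
      ext x
      rw [mem_union, hPdef, hNdef, mem_filter, mem_filter, mem_filter]
      constructor
      · rintro ⟨hx, hne⟩
        rcases lt_trichotomy (f x) 0 with h | h | h
        · exact Or.inr ⟨hx, by linarith⟩
        · exact absurd h hne
        · exact Or.inl ⟨hx, h⟩
      · rintro (⟨hx, hpos⟩ | ⟨hx, hneg⟩)
        · exact ⟨hx, by intro hh; rw [hh] at hpos; exact lt_irrefl 0 hpos⟩
        · exact ⟨hx, by intro hh; rw [hh] at hneg; simp at hneg⟩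
    have hdisjPN : Disjoint P N := by
      rw [disjoint_left]
      intro x hx1 hx2
      rw [hPdef, mem_filter] at hx1
      rw [hNdef, mem_filter] at hx2
      linarith [hx1.2, hx2.2]
    have h3 : (P ∪ N).card = P.card + N.card := card_union_of_disjoint hdisjPN
    have h4 : (Finset.Icc 1 a).card = a := by
      rw [Nat.card_Icc]
      omega
    rw [h2, h3] at h1
    omega
  -- problems bound
  have hProbTot : probP.card + probN.card ≤
      (((Finset.Icc 1 a) ×ˢ (Finset.Icc 1 a)).filter
        (fun x => f (x.1 + x.2) ≠ f x.1 + f x.2)).card := by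
    have hdisj : Disjoint probP probN := by
      rw [disjoint_left]
      intro w hw1 hw2
      rw [hprobPdef, mem_filter, mem_product] at hw1
      rw [hprobNdef, mem_filter, mem_product] at hw2
      have ha1 : w.1 ∈ P := hw1.1.1
      have ha2 : w.1 ∈ N := hw2.1.1
      rw [hPdef, mem_filter] at ha1
      rw [hNdef, mem_filter] at ha2
      linarith [ha1.2, ha2.2]
    rw [← card_union_of_disjoint hdisj]
    apply card_le_card
    intro w hw
    rw [mem_union] at hw
    rw [mem_filter, mem_product]
    rcases hw with hw | hw
    · rw [hprobPdef, mem_filter, mem_product] at hw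
      refine ⟨⟨mem_of_mem_filter _ hw.1.1, mem_of_mem_filter _ hw.1.2⟩, hw.2⟩
    · rw [hprobNdef, mem_filter, mem_product] at hw
      refine ⟨⟨mem_of_mem_filter _ hw.1.1, mem_of_mem_filter _ hw.1.2⟩, ?_⟩
      intro hh
      exact hw.2 (by show -(f (w.1+w.2)) = -(f w.1) + -(f w.2); rw [hh]; ring)
  -- move to ℚ
  set U : ℚ := (P.card : ℚ) with hU
  set V : ℚ := (N.card : ℚ) with hV
  set k1 : ℚ := ((min SP.card (2 * P.card) : ℕ) : ℚ) with hk1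
  set k2 : ℚ := ((min SN.card (2 * N.card) : ℕ) : ℚ) with hk2
  have hq1' : (((Finset.Icc 1 a).filter (fun x => f x = 0)).card : ℚ) = a - U - V := by
    have hcast : (P.card : ℚ) + (N.card : ℚ)
        + (((Finset.Icc 1 a).filter (fun x => f x = 0)).card : ℚ) = (a : ℚ) := by
      exact_mod_cast hPart
    rw [hU, hV]
    linarith
  have hUV : (a : ℚ) - q * a ≤ U + V := by
    rw [hq1'] at hZ
    linarith
  have hk1K : k1 ≤ (SP.card : ℚ) := by rw [hk1]; exact_mod_cast Nat.cast_le.mpr (min_le_left _ _)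
  have hk2K : k2 ≤ (SN.card : ℚ) := by rw [hk2]; exact_mod_cast Nat.cast_le.mpr (min_le_left _ _)
  have hk1U : k1 ≤ 2 * U := by
    rw [hk1, hU]
    have := min_le_right SP.card (2 * P.card)
    exact_mod_cast this
  have hk2V : k2 ≤ 2 * V := by
    rw [hk2, hV]
    have := min_le_right SN.card (2 * N.card)
    exact_mod_cast this
  have hk10 : 0 ≤ k1 := by rw [hk1]; positivity
  have hk20 : 0 ≤ k2 := by rw [hk2]; positivity
  have hksum : k1 + k2 ≤ p * a := by
    have h1 : k1 + k2 ≤ (SP.card : ℚ) + (SN.card : ℚ) := by linarith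
    have h2 : (SP.card : ℚ) + (SN.card : ℚ) ≤
        (((Finset.Icc 1 a).filter (fun x => f (x + a) ≠ f x)).card : ℚ) := by
      exact_mod_cast hKsum
    linarith
  -- side bounds in ℚ
  have hPsideQ : U ^ 2 + U ≤ 2 * (probP.card : ℚ) + 2 * (AP.card : ℚ) := by
    rw [hU]
    exact_mod_cast hPside
  have hNsideQ : V ^ 2 + V ≤ 2 * (probN.card : ℚ) + 2 * (AN.card : ℚ) := by
    rw [hV]
    exact_mod_cast hNside
  have hHPQ : 4 * (AP.card : ℚ) + k1 ^ 2 ≤ 4 * k1 * U + k1 := by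
    rw [hk1, hU]
    exact_mod_cast hHP
  have hHNQ : 4 * (AN.card : ℚ) + k2 ^ 2 ≤ 4 * k2 * V + k2 := by
    rw [hk2, hV]
    exact_mod_cast hHN
  have hProbTotQ : (probP.card : ℚ) + (probN.card : ℚ) ≤
      ((((Finset.Icc 1 a) ×ˢ (Finset.Icc 1 a)).filter
        (fun x => f (x.1 + x.2) ≠ f x.1 + f x.2)).card : ℚ) := by
    exact_mod_cast hProbTot
  -- final algebra
  have hc0 : 0 ≤ (1 - q - 2 * p) := by linarith
  have ha0 : (0:ℚ) ≤ a := by positivity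
  have hca : 0 ≤ (1 - q - 2 * p) * a := mul_nonneg hc0 ha0
  have hW0 : (1 - q - 2 * p) * a ≤ U + V - 2*k1 - 2*k2 := by nlinarith [hUV, hksum]
  have hkey := keyQ U V k1 k2 hk10 hk20 hk1U hk2V (by linarith)
  have step1 : ((1 - q - 2 * p) ^ 2 / 4) * (a : ℚ) ^ 2 + ((1 - q - 2 * p) / 2) * a ≤
      ((U + V - 2*k1 - 2*k2) ^ 2 + 2 * (U + V - 2*k1 - 2*k2)) / 4 := by
    have hfac : 0 ≤ ((U + V - 2*k1 - 2*k2) - (1 - q - 2*p) * a)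
        * ((U + V - 2*k1 - 2*k2) + (1 - q - 2*p) * a + 2) := by
      apply mul_nonneg
      · linarith
      · linarith
    nlinarith [hfac]
  have step2 : ((U + V - 2*k1 - 2*k2) ^ 2 + 2 * (U + V - 2*k1 - 2*k2)) / 4 ≤
      ((((Finset.Icc 1 a) ×ˢ (Finset.Icc 1 a)).filter
        (fun x => f (x.1 + x.2) ≠ f x.1 + f x.2)).card : ℚ) := by
    linarith [hkey, hPsideQ, hNsideQ, hHPQ, hHNQ, hProbTotQ]
  linarith
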